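/- arXiv:1003.4897 — 3 statements merged into one kernel-verified Lean document; each statement's English description precedes it below -/
import Mathlib

section
/- Let N ≥ 1, let α₁, …, α_N ∈ ℂ be pairwise distinct, and let q₁, …, q_N ∈ ℂ[X, Y] be polynomials in two variables, not all identically zero. Define Q : ℂ → ℂ by Q(λ) = Σ_{k=1}^N q_k(λ, conj(λ))·exp(λ·α_k − conj(λ)·conj(α_k)) (each exponent is purely imaginary, so every exponential factor has modulus 1). Then for every ε > 0 there exists a constant C > 0 such that for every λ ∈ ℂ one has sup_{λ' ∈ ℂ, |λ'−λ| ≤ ε} |Q(λ')| ≥ 1/C. -/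
open scoped BigOperators

section ExpPolyAux

open Polynomial Complex

lemma deriv_step (p : ℂ[X]) (γ : ℂ) (z : ℂ) :
    HasDerivAt (fun z => p.eval z * Complex.exp (γ * z))
      ((p.derivative + γ • p).eval z * Complex.exp (γ * z)) z := by
  have h1 : HasDerivAt (fun z => p.eval z) (p.derivative.eval z) z := p.hasDerivAt z
  have h2 : HasDerivAt (fun z : ℂ => Complex.exp (γ * z)) (γ * Complex.exp (γ * z)) z := by
    simpa [mul_comm] using ((hasDerivAt_id z).const_mul γ).cexp
  have := h1.fun_mul h2
  refine this.congr_deriv ?_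
  simp only [Polynomial.eval_add, Polynomial.eval_smul, smul_eq_mul]
  ring

lemma dop_ker {γ : ℂ} (hγ : γ ≠ 0) {p : ℂ[X]} (h : p.derivative + γ • p = 0) : p = 0 := by
  by_contra hp
  have h0 : p.derivative.coeff p.natDegree = 0 := by
    rw [Polynomial.coeff_derivative,
      Polynomial.coeff_eq_zero_of_natDegree_lt (by omega)]
    ring
  have hd : (p.derivative + γ • p).coeff p.natDegree = γ * p.leadingCoeff := by
    rw [Polynomial.coeff_add, Polynomial.coeff_smul, h0, zero_add, smul_eq_mul]
    rfl
  rw [h] at hd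
  simp only [Polynomial.coeff_zero] at hd
  exact hp (Polynomial.leadingCoeff_eq_zero.mp (by
    rcases mul_eq_zero.mp hd.symm with h1 | h2
    · exact absurd h1 hγ
    · exact h2))

lemma dop_iter_ker {γ : ℂ} (hγ : γ ≠ 0) (m : ℕ) {p : ℂ[X]}
    (h : (fun r : ℂ[X] => r.derivative + γ • r)^[m] p = 0) : p = 0 := by
  induction m generalizing p with
  | zero => simpa using h
  | succ m ih =>
    rw [Function.iterate_succ_apply] at h
    exact dop_ker hγ (ih h)

/-- linear independence of z^a e^{βz} -/
lemma expPoly_indep : ∀ (n : ℕ) (β : Fin n → ℂ), Function.Injective β →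
    ∀ (p : Fin n → ℂ[X]), (∀ z : ℂ, ∑ k, (p k).eval z * Complex.exp (β k * z) = 0) →
    ∀ k, p k = 0 := by
  intro n
  induction n with
  | zero => intro β hβ p h k; exact absurd k.2 (by omega)
  | succ n ih =>
    intro β hβ p h
    set L := Fin.last n
    set γ : Fin (n+1) → ℂ := fun k => β k - β L with hγdef
    have hg : ∀ z : ℂ, ∑ k, (p k).eval z * Complex.exp (γ k * z) = 0 := by
      intro z
      have := h z
      have h2 : (∑ k, (p k).eval z * Complex.exp (β k * z)) * Complex.exp (-(β L * z)) = 0 := by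
        rw [this]; ring
      rw [Finset.sum_mul] at h2
      rw [← h2]
      apply Finset.sum_congr rfl
      intro k _
      rw [mul_assoc, ← Complex.exp_add, hγdef]
      ring_nf
    set m := (p L).natDegree + 1 with hm
    set Dop : ℂ → ℂ[X] → ℂ[X] := fun γ r => r.derivative + γ • r with hDop
    -- iterated derivative claim
    have iter : ∀ j : ℕ, ∀ z : ℂ, ∑ k, ((Dop (γ k))^[j] (p k)).eval z * Complex.exp (γ k * z) = 0 := by
      intro j
      induction j with
      | zero => simpa using hg
      | succ j ihj =>
        intro z
        have hder : HasDerivAt (fun z => ∑ k, ((Dop (γ k))^[j] (p k)).eval z * Complex.exp (γ k * z))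
            (∑ k, ((Dop (γ k))^[j+1] (p k)).eval z * Complex.exp (γ k * z)) z := by
          have : ∀ k ∈ Finset.univ, HasDerivAt
              (fun z => ((Dop (γ k))^[j] (p (k : Fin (n+1)))).eval z * Complex.exp (γ k * z))
              (((Dop (γ k))^[j+1] (p k)).eval z * Complex.exp (γ k * z)) z := by
            intro k _
            rw [Function.iterate_succ_apply']
            exact deriv_step _ _ z
          exact HasDerivAt.fun_sum this
        have hzero : HasDerivAt (fun _ : ℂ => (0:ℂ))
            (∑ k, ((Dop (γ k))^[j+1] (p k)).eval z * Complex.exp (γ k * z)) z := by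
          apply hder.congr_of_eventuallyEq
          filter_upwards with w using (ihj w).symm
        exact hzero.unique (hasDerivAt_const z 0)
    -- specialize at j = m : last-term polynomial vanishes
    have hlast0 : (Dop (γ L))^[m] (p L) = 0 := by
      have hγL : γ L = 0 := by simp [hγdef]
      have hDop0 : Dop (γ L) = fun r : ℂ[X] => r.derivative := by
        funext r; simp [hDop, hγL]
      rw [hDop0]
      have : (fun r : ℂ[X] => r.derivative)^[m] (p L)
          = Polynomial.derivative^[m] (p L) := by
        congr
      rw [this]
      exact Polynomial.iterate_derivative_eq_zero (by omega)
    -- reduce to Fin n sum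
    have hredsum : ∀ z : ℂ, ∑ k : Fin n,
        ((Dop (γ k.castSucc))^[m] (p k.castSucc)).eval z
          * Complex.exp (γ k.castSucc * z) = 0 := by
      intro z
      have := iter m z
      rw [Fin.sum_univ_castSucc] at this
      rw [hlast0] at this
      simpa using this
    have hβcs : Function.Injective (fun k : Fin n => γ k.castSucc) := by
      intro a b hab
      have h2 : β a.castSucc - β L = β b.castSucc - β L := hab
      exact Fin.castSucc_injective n (hβ (sub_left_inj.mp h2))
    have hzero : ∀ k : Fin n, (Dop (γ k.castSucc))^[m] (p k.castSucc) = 0 :=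
      ih _ hβcs _ hredsum
    have hpcs : ∀ k : Fin n, p k.castSucc = 0 := by
      intro k
      have hne : γ k.castSucc ≠ 0 := by
        simp only [hγdef, sub_ne_zero]
        intro hc
        exact absurd (hβ hc) (by simp [L, Fin.ext_iff]; omega)
      exact dop_iter_ker hne m (hzero k)
    -- deduce p L = 0
    have hL : p L = 0 := by
      have hsum : ∀ z : ℂ, (p L).eval z * Complex.exp (β L * z) = 0 := by
        intro z
        have := h z
        rw [Fin.sum_univ_castSucc] at this
        have hz : ∀ k : Fin n, (p k.castSucc).eval z * Complex.exp (β k.castSucc * z) = 0 := by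
          intro k; rw [hpcs k]; simp
        rw [Finset.sum_congr rfl (fun k _ => hz k)] at this
        simpa using this
      apply Polynomial.funext
      intro z
      have := hsum z
      rcases mul_eq_zero.mp this with h1 | h2
      · simpa using h1
      · exact absurd h2 (Complex.exp_ne_zero _)
    intro k
    rcases Fin.eq_castSucc_or_eq_last k with ⟨j, rfl⟩ | rfl
    · exact hpcs j
    · exact hL

open Polynomial Complex

lemma entire_zero_of_real_zero (f : ℂ → ℂ) (hf : Differentiable ℂ f) (δ : ℝ) (hδ : 0 < δ)
    (h : ∀ t : ℝ, |t| ≤ δ → f t = 0) : ∀ z, f z = 0 := by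
  have han : AnalyticOnNhd ℂ f Set.univ :=
    hf.differentiableOn.analyticOnNhd isOpen_univ
  have hfreq : ∃ᶠ z in nhdsWithin (0:ℂ) {(0:ℂ)}ᶜ, f z = 0 := by
    set u : ℕ → ℂ := fun n => ((δ / (n+1) : ℝ) : ℂ) with hu
    have h1 : Filter.Tendsto u Filter.atTop (nhds (0:ℂ)) := by
      rw [show (0:ℂ) = ((0:ℝ):ℂ) by norm_num]
      apply Filter.Tendsto.comp (Complex.continuous_ofReal.tendsto 0)
      simpa using tendsto_one_div_add_atTop_nhds_zero_nat.const_mul δ |>.congr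
        (fun n => by field_simp)
    have h2 : ∀ n : ℕ, u n ∈ {x : ℂ | x ≠ 0} := by
      intro n
      simp only [hu, Set.mem_setOf_eq, ne_eq, Complex.ofReal_eq_zero]
      positivity
    have h3 : Filter.Tendsto u Filter.atTop (nhdsWithin (0:ℂ) {(0:ℂ)}ᶜ) :=
      tendsto_nhdsWithin_of_tendsto_nhds_of_eventually_within u h1
        (Filter.Eventually.of_forall h2)
    apply h3.frequently
    apply Filter.Frequently.of_forall
    intro n
    apply h (δ / (n+1))
    rw [abs_of_pos (by positivity)]
    rw [div_le_iff₀ (by positivity)]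
    nlinarith [hδ.le]
  have := han.eqOn_zero_of_preconnected_of_frequently_eq_zero isPreconnected_univ
    (Set.mem_univ (0:ℂ)) hfreq
  intro z
  exact this (Set.mem_univ z)

lemma step1 (N D : ℕ) (α : Fin N → ℂ) (hα : Function.Injective α)
    (ε : ℝ) (hε : 0 < ε) (c : Fin N × Fin (D+1) × Fin (D+1) → ℂ)
    (h : ∀ z ∈ Metric.closedBall (0:ℂ) ε,
      ∑ s : Fin N × Fin (D+1) × Fin (D+1),
        c s * z^(s.2.1:ℕ) * ((starRingEnd ℂ) z)^(s.2.2:ℕ)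
          * Complex.exp (z * α s.1 - (starRingEnd ℂ) z * (starRingEnd ℂ) (α s.1)) = 0) :
    c = 0 := by
  set K : ℂ → ℂ → ℂ := fun x y =>
    ∑ s : Fin N × Fin (D+1) × Fin (D+1),
      c s * (x + Complex.I*y)^(s.2.1:ℕ) * (x - Complex.I*y)^(s.2.2:ℕ)
        * Complex.exp ((x + Complex.I*y) * α s.1 - (x - Complex.I*y) * (starRingEnd ℂ) (α s.1))
    with hK
  have hdiff1 : ∀ y : ℂ, Differentiable ℂ (fun x => K x y) := by
    intro y
    rw [hK]
    fun_prop
  have hdiff2 : ∀ x : ℂ, Differentiable ℂ (fun y => K x y) := by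
    intro x
    rw [hK]
    fun_prop
  -- K vanishes on small real points
  have hreal : ∀ x y : ℝ, |x| ≤ ε/2 → |y| ≤ ε/2 → K x y = 0 := by
    intro x y hx hy
    have hz : ((x:ℂ) + Complex.I * y) ∈ Metric.closedBall (0:ℂ) ε := by
      rw [Metric.mem_closedBall, dist_zero_right]
      calc ‖(x:ℂ) + Complex.I * y‖ ≤ ‖(x:ℂ)‖ + ‖Complex.I * (y:ℂ)‖ := norm_add_le _ _
        _ = |x| + |y| := by simp
        _ ≤ ε := by linarith
    have hconj : (starRingEnd ℂ) ((x:ℂ) + Complex.I * y) = (x:ℂ) - Complex.I * y := by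
      simp [map_add, map_mul, Complex.conj_ofReal, Complex.conj_I]
      ring
    have := h _ hz
    rw [hK]
    rw [← this]
    apply Finset.sum_congr rfl
    intro s _
    rw [hconj]
  -- extend to all of ℂ²
  have hall : ∀ x y : ℂ, K x y = 0 := by
    have hstep : ∀ y : ℝ, |y| ≤ ε/2 → ∀ x : ℂ, K x y = 0 := by
      intro y hy
      apply entire_zero_of_real_zero _ (hdiff1 _) (ε/2) (by linarith)
      intro t ht
      exact hreal t y ht hy
    intro x y
    apply entire_zero_of_real_zero (fun y => K x y) (hdiff2 x) (ε/2) (by linarith)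
    intro t ht
    exact hstep t ht x
  -- substitution: for all z w
  have hG : ∀ z w : ℂ, ∑ s : Fin N × Fin (D+1) × Fin (D+1),
      c s * z^(s.2.1:ℕ) * w^(s.2.2:ℕ)
        * Complex.exp (z * α s.1 - w * (starRingEnd ℂ) (α s.1)) = 0 := by
    intro z w
    have h1 : (z+w)/2 + Complex.I * ((z-w)/(2*Complex.I)) = z := by
      field_simp
      ring
    have h2 : (z+w)/2 - Complex.I * ((z-w)/(2*Complex.I)) = w := by
      field_simp
      ring
    have := hall ((z+w)/2) ((z-w)/(2*Complex.I))
    rw [hK] at this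
    simp only [h1, h2] at this
    exact this
  -- now extract coefficients
  funext s
  obtain ⟨k, a0, b0⟩ := s
  -- for each w the exponential polynomial in z vanishes
  have hb : ∀ w : ℂ, (∑ b : Fin (D+1), c (k, a0, b) * w^(b:ℕ)) = 0 := by
    intro w
    set p : Fin N → ℂ[X] := fun k =>
      ∑ a : Fin (D+1), Polynomial.C
        ((∑ b : Fin (D+1), c (k, a, b) * w^(b:ℕ))
          * Complex.exp (-(w * (starRingEnd ℂ) (α k)))) * Polynomial.X^(a:ℕ) with hp
    have hsum : ∀ z : ℂ, ∑ j, (p j).eval z * Complex.exp (α j * z) = 0 := by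
      intro z
      rw [← hG z w]
      rw [Fintype.sum_prod_type]
      apply Finset.sum_congr rfl
      intro j _
      rw [hp]
      simp only [Polynomial.eval_finset_sum, Polynomial.eval_mul, Polynomial.eval_C,
        Polynomial.eval_pow, Polynomial.eval_X]
      rw [Finset.sum_mul]
      rw [Fintype.sum_prod_type]
      apply Finset.sum_congr rfl
      intro a _
      rw [Finset.sum_mul, Finset.sum_mul, Finset.sum_mul]
      apply Finset.sum_congr rfl
      intro b _
      rw [show z * α j - w * (starRingEnd ℂ) (α j)
        = α j * z + (-(w * (starRingEnd ℂ) (α j))) by ring, Complex.exp_add]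
      ring
    have hp0 : p k = 0 := expPoly_indep N α hα p hsum k
    have hcoeff : (p k).coeff (a0:ℕ)
        = (∑ b : Fin (D+1), c (k, a0, b) * w^(b:ℕ))
          * Complex.exp (-(w * (starRingEnd ℂ) (α k))) := by
      rw [hp]
      rw [Polynomial.finset_sum_coeff]
      rw [Finset.sum_eq_single a0]
      · rw [Polynomial.coeff_C_mul, Polynomial.coeff_X_pow, if_pos rfl, mul_one]
      · intro a _ ha
        simp only [Polynomial.coeff_C_mul, Polynomial.coeff_X_pow]
        rw [if_neg (by simpa [Fin.val_eq_val] using (Ne.symm ha))]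
        ring
      · intro habs
        exact absurd (Finset.mem_univ a0) habs
    rw [hp0] at hcoeff
    simp only [Polynomial.coeff_zero] at hcoeff
    rcases mul_eq_zero.mp hcoeff.symm with h1 | h2
    · exact h1
    · exact absurd h2 (Complex.exp_ne_zero _)
  -- polynomial in w vanishes identically
  set hpoly : ℂ[X] := ∑ b : Fin (D+1), Polynomial.C (c (k, a0, b)) * Polynomial.X^(b:ℕ)
    with hhp
  have hpz : hpoly = 0 := by
    apply Polynomial.funext
    intro w
    rw [hhp]
    simp only [Polynomial.eval_finset_sum, Polynomial.eval_mul, Polynomial.eval_C,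
      Polynomial.eval_pow, Polynomial.eval_X, Polynomial.eval_zero]
    exact hb w
  have : hpoly.coeff (b0:ℕ) = c (k, a0, b0) := by
    rw [hhp, Polynomial.finset_sum_coeff]
    rw [Finset.sum_eq_single b0]
    · rw [Polynomial.coeff_C_mul, Polynomial.coeff_X_pow, if_pos rfl, mul_one]
    · intro b _ hbne
      simp only [Polynomial.coeff_C_mul, Polynomial.coeff_X_pow]
      rw [if_neg (by simpa [Fin.val_eq_val] using (Ne.symm hbne))]
      ring
    · intro habs
      exact absurd (Finset.mem_univ b0) habs
  rw [hpz] at this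
  simp only [Polynomial.coeff_zero] at this
  exact this.symm


open Complex

lemma degsum (m : Fin 2 →₀ ℕ) : (m.sum fun _ e => e) = m 0 + m 1 := by
  rw [Finsupp.sum_fintype _ _ (fun _ => rfl)]
  exact Fin.sum_univ_two m

lemma expand (D : ℕ) (p : MvPolynomial (Fin 2) ℂ) (hD : p.totalDegree ≤ D) (x y z w : ℂ) :
    MvPolynomial.eval ![x+z, y+w] p
    = ∑ a ∈ Finset.range (D+1), ∑ b ∈ Finset.range (D+1),
        (∑ m ∈ p.support, MvPolynomial.coeff m p * ((m 0).choose a) * ((m 1).choose b)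
          * x^(m 0 - a) * y^(m 1 - b)) * z^a * w^b := by
  rw [MvPolynomial.eval_eq']
  have hm0 : ∀ m ∈ p.support, m 0 ≤ D ∧ m 1 ≤ D := by
    intro m hm
    have := MvPolynomial.le_totalDegree hm
    rw [degsum] at this
    omega
  calc ∑ m ∈ p.support, MvPolynomial.coeff m p * ∏ i, ![x+z, y+w] i ^ m i
      = ∑ m ∈ p.support, ∑ a ∈ Finset.range (D+1), ∑ b ∈ Finset.range (D+1),
          MvPolynomial.coeff m p * ((m 0).choose a) * ((m 1).choose b)
            * x^(m 0 - a) * y^(m 1 - b) * z^a * w^b := by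
        apply Finset.sum_congr rfl
        intro m hm
        obtain ⟨h0, h1⟩ := hm0 m hm
        have e1 : (x+z)^(m 0) = ∑ a ∈ Finset.range (D+1),
            z^a * x^(m 0 - a) * ((m 0).choose a : ℂ) := by
          rw [add_comm x z, add_pow]
          apply Finset.sum_subset
          · exact Finset.range_subset_range.mpr (by omega)
          · intro a _ ha
            rw [Finset.mem_range, not_lt] at ha
            rw [Nat.choose_eq_zero_of_lt (by omega)]
            simp
        have e2 : (y+w)^(m 1) = ∑ b ∈ Finset.range (D+1),
            w^b * y^(m 1 - b) * ((m 1).choose b : ℂ) := by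
          rw [add_comm y w, add_pow]
          apply Finset.sum_subset
          · exact Finset.range_subset_range.mpr (by omega)
          · intro b _ hb
            rw [Finset.mem_range, not_lt] at hb
            rw [Nat.choose_eq_zero_of_lt (by omega)]
            simp
        rw [Fin.prod_univ_two]
        simp only [Matrix.cons_val_zero, Matrix.cons_val_one, Matrix.head_cons]
        rw [e1, e2, Finset.sum_mul_sum, Finset.mul_sum]
        apply Finset.sum_congr rfl
        intro a _
        rw [Finset.mul_sum]
        apply Finset.sum_congr rfl
        intro b _
        ring
    _ = ∑ a ∈ Finset.range (D+1), ∑ b ∈ Finset.range (D+1),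
          (∑ m ∈ p.support, MvPolynomial.coeff m p * ((m 0).choose a) * ((m 1).choose b)
            * x^(m 0 - a) * y^(m 1 - b)) * z^a * w^b := by
        rw [Finset.sum_comm]
        apply Finset.sum_congr rfl
        intro a _
        rw [Finset.sum_comm]
        apply Finset.sum_congr rfl
        intro b _
        rw [Finset.sum_mul, Finset.sum_mul]

open Complex


end ExpPolyAux

open Complex in

set_option maxHeartbeats 1000000 in
/-- The uniform lower bound (7.5) of the paper: an exponential polynomial in
`λ` and `conj λ` with purely imaginary exponents and not-all-zero polynomial
coefficients is uniformly bounded below on ε-discs. -/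
theorem exponential_polynomial_purely_imaginary_uniform_lower_bound
    (N : ℕ) (hN : 1 ≤ N) (α : Fin N → ℂ) (hα : Function.Injective α)
    (q : Fin N → MvPolynomial (Fin 2) ℂ) (hq : ∃ k, q k ≠ 0)
    (ε : ℝ) (hε : 0 < ε) :
    ∃ C > (0 : ℝ), ∀ lam : ℂ,
      1 / C ≤ sSup ((fun l : ℂ =>
          ‖(∑ k, MvPolynomial.eval ![l, (starRingEnd ℂ) l] (q k) *
            Complex.exp (l * α k - (starRingEnd ℂ) l * (starRingEnd ℂ) (α k)))‖) ''
        {l : ℂ | ‖(l - lam)‖ ≤ ε}) := by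
  classical
  obtain ⟨k0, hk0⟩ := hq
  set D := Finset.univ.sup (fun k => (q k).totalDegree) with hD
  have hDk : ∀ k, (q k).totalDegree ≤ D := fun k => hD ▸ Finset.le_sup (f := fun k => (q k).totalDegree) (Finset.mem_univ k)
  set Q : ℂ → ℂ := fun l => ∑ k, MvPolynomial.eval ![l, (starRingEnd ℂ) l] (q k) *
      Complex.exp (l * α k - (starRingEnd ℂ) l * (starRingEnd ℂ) (α k)) with hQ
  set g : (Fin N × Fin (D+1) × Fin (D+1)) → ℂ → ℂ := fun s z =>
    z^(s.2.1:ℕ) * ((starRingEnd ℂ) z)^(s.2.2:ℕ)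
      * Complex.exp (z * α s.1 - (starRingEnd ℂ) z * (starRingEnd ℂ) (α s.1)) with hg
  set r : Fin N → ℕ → ℕ → ℂ → ℂ := fun k a b lam =>
    ∑ m ∈ (q k).support, MvPolynomial.coeff m (q k) * ((m 0).choose a) * ((m 1).choose b)
      * lam^(m 0 - a) * ((starRingEnd ℂ) lam)^(m 1 - b) with hr
  set coef : ℂ → (Fin N × Fin (D+1) × Fin (D+1)) → ℂ := fun lam s =>
    Complex.exp (lam * α s.1 - (starRingEnd ℂ) lam * (starRingEnd ℂ) (α s.1))
      * r s.1 s.2.1 s.2.2 lam with hcoef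
  -- the key algebraic identity
  have key : ∀ lam z : ℂ, Q (lam + z) = ∑ s, coef lam s * g s z := by
    intro lam z
    rw [hQ]
    simp only
    rw [Fintype.sum_prod_type]
    apply Finset.sum_congr rfl
    intro k _
    have hconj : (starRingEnd ℂ) (lam + z) = (starRingEnd ℂ) lam + (starRingEnd ℂ) z :=
      map_add _ _ _
    rw [hconj]
    rw [expand D (q k) (hDk k) lam ((starRingEnd ℂ) lam) z ((starRingEnd ℂ) z)]
    have hexp : Complex.exp ((lam + z) * α k
        - ((starRingEnd ℂ) lam + (starRingEnd ℂ) z) * (starRingEnd ℂ) (α k))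
        = Complex.exp (lam * α k - (starRingEnd ℂ) lam * (starRingEnd ℂ) (α k))
          * Complex.exp (z * α k - (starRingEnd ℂ) z * (starRingEnd ℂ) (α k)) := by
      rw [← Complex.exp_add]
      congr 1
      ring
    rw [hexp]
    have hRHS : ∀ (F : ℕ → ℕ → ℂ), (∑ x : Fin (D+1), ∑ y : Fin (D+1), F ↑x ↑y)
        = ∑ a ∈ Finset.range (D+1), ∑ b ∈ Finset.range (D+1), F a b := by
      intro F
      rw [Fin.sum_univ_eq_sum_range (fun a => ∑ y : Fin (D+1), F a ↑y) (D+1)]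
      exact Finset.sum_congr rfl
        (fun a _ => Fin.sum_univ_eq_sum_range (fun b => F a b) (D+1))
    trans (∑ a ∈ Finset.range (D+1), ∑ b ∈ Finset.range (D+1),
      Complex.exp (lam * α k - (starRingEnd ℂ) lam * (starRingEnd ℂ) (α k))
        * r k a b lam
        * (z^a * ((starRingEnd ℂ) z)^b
            * Complex.exp (z * α k - (starRingEnd ℂ) z * (starRingEnd ℂ) (α k))))
    · rw [Finset.sum_mul]
      refine Finset.sum_congr rfl (fun a _ => ?_)
      rw [Finset.sum_mul]
      refine Finset.sum_congr rfl (fun b _ => ?_)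
      simp only [hr]
      ring
    · rw [← hRHS (fun a b =>
        Complex.exp (lam * α k - (starRingEnd ℂ) lam * (starRingEnd ℂ) (α k))
          * r k a b lam
          * (z^a * ((starRingEnd ℂ) z)^b
              * Complex.exp (z * α k - (starRingEnd ℂ) z * (starRingEnd ℂ) (α k))))]
      rw [Fintype.sum_prod_type]
  -- continuous-map machinery
  haveI : CompactSpace (Metric.closedBall (0:ℂ) ε) :=
    isCompact_iff_compactSpace.mp (isCompact_closedBall _ _)
  have hgc : ∀ s, Continuous (g s) := by
    intro s
    rw [hg]
    apply Continuous.mul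
    · apply Continuous.mul
      · exact continuous_pow _
      · exact (Complex.continuous_conj).pow _
    · apply Complex.continuous_exp.comp
      apply Continuous.sub
      · exact continuous_id.mul continuous_const
      · exact Complex.continuous_conj.mul continuous_const
  set G : (Fin N × Fin (D+1) × Fin (D+1)) → C(Metric.closedBall (0:ℂ) ε, ℂ) :=
    fun s => ⟨fun z => g s (z:ℂ), (hgc s).comp continuous_subtype_val⟩ with hG
  set T : ((Fin N × Fin (D+1) × Fin (D+1)) → ℂ) →ₗ[ℂ] C(Metric.closedBall (0:ℂ) ε, ℂ) :=
    { toFun := fun c => ∑ s, c s • G s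
      map_add' := by
        intro c d
        simp [add_smul, Finset.sum_add_distrib]
      map_smul' := by
        intro t c
        simp [smul_smul, Finset.smul_sum] } with hT
  have hker : LinearMap.ker T = ⊥ := by
    rw [LinearMap.ker_eq_bot']
    intro c hc
    apply step1 N D α hα ε hε c
    intro z hz
    have := congrArg (fun f => f ⟨z, hz⟩) hc
    simp only [hT, LinearMap.coe_mk, AddHom.coe_mk, ContinuousMap.coe_sum,
      Finset.sum_apply, ContinuousMap.coe_smul, Pi.smul_apply,
      ContinuousMap.zero_apply, Pi.zero_apply] at this
    rw [← this]
    apply Finset.sum_congr rfl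
    intro s _
    simp only [hG, ContinuousMap.coe_mk, smul_eq_mul, hg]
    ring
  obtain ⟨K, hK0, hKanti⟩ := T.exists_antilipschitzWith hker
  have hTbound : ∀ c, ‖c‖ ≤ (K:ℝ) * ‖T c‖ := by
    intro c
    have := hKanti.le_mul_dist c 0
    simpa [dist_zero_right, map_zero] using this
  -- the distinguished coefficient
  obtain ⟨m0, hm0mem, hm0max⟩ := (q k0).support.exists_mem_eq_sup
    (Finset.nonempty_iff_ne_empty.mpr (by simpa [MvPolynomial.support_eq_empty] using hk0)) (fun m => m.sum fun _ e => e)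
  have htot : (q k0).totalDegree = m0 0 + m0 1 := by
    rw [MvPolynomial.totalDegree, hm0max, degsum]
  have ha0 : m0 0 < D + 1 := by have := hDk k0; omega
  have hb0 : m0 1 < D + 1 := by have := hDk k0; omega
  set ρ := ‖(MvPolynomial.coeff m0 (q k0))‖ with hρ
  have hρ0 : 0 < ρ := by
    rw [hρ]
    simp only [norm_pos_iff]
    exact MvPolynomial.mem_support_iff.mp hm0mem
  have hrconst : ∀ lam : ℂ, r k0 (m0 0) (m0 1) lam = MvPolynomial.coeff m0 (q k0) := by
    intro lam
    rw [hr]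
    simp only
    rw [Finset.sum_eq_single m0]
    · simp
    · intro m hm hne
      have hdeg : (m.sum fun _ e => e) ≤ m0 0 + m0 1 := by
        rw [← htot]
        exact MvPolynomial.le_totalDegree hm
      rw [degsum] at hdeg
      have : m 0 < m0 0 ∨ m 1 < m0 1 := by
        by_contra hcon
        push_neg at hcon
        obtain ⟨h1, h2⟩ := hcon
        have e0 : m 0 = m0 0 := by omega
        have e1 : m 1 = m0 1 := by omega
        apply hne
        ext i
        fin_cases i
        · exact e0
        · exact e1
      rcases this with h | h
      · rw [Nat.choose_eq_zero_of_lt h]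
        simp
      · rw [Nat.choose_eq_zero_of_lt h]
        simp
    · intro habs
      exact absurd hm0mem habs
  have hcoefabs : ∀ lam : ℂ,
      ‖(coef lam (k0, ⟨m0 0, ha0⟩, ⟨m0 1, hb0⟩))‖ = ρ := by
    intro lam
    rw [hcoef]
    simp only
    rw [norm_mul]
    rw [hrconst lam]
    rw [Complex.norm_exp]
    have hre : (lam * α k0 - (starRingEnd ℂ) lam * (starRingEnd ℂ) (α k0)).re = 0 := by
      rw [← map_mul]
      simp [Complex.sub_re, Complex.conj_re]
    rw [hre, Real.exp_zero, one_mul, hρ]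
  refine ⟨(K:ℝ) / ρ, by positivity, ?_⟩
  intro lam
  set c := coef lam with hc
  -- identify the image set
  have hset : {l : ℂ | ‖(l - lam)‖ ≤ ε} = (fun z => lam + z) '' Metric.closedBall (0:ℂ) ε := by
    ext l
    simp only [Set.mem_setOf_eq, Set.mem_image, Metric.mem_closedBall, dist_zero_right]
    constructor
    · intro hl
      exact ⟨l - lam, by simpa using hl, by ring⟩
    · rintro ⟨z, hz, rfl⟩
      simpa [add_sub_cancel_left] using hz
  have himg : ((fun l : ℂ => ‖(Q l)‖) '' {l : ℂ | ‖(l - lam)‖ ≤ ε})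
      = (fun z : ℂ => ‖(Q (lam + z))‖) '' Metric.closedBall (0:ℂ) ε := by
    rw [hset, Set.image_image]
  have hbdd : BddAbove ((fun z : ℂ => ‖(Q (lam + z))‖) '' Metric.closedBall (0:ℂ) ε) := by
    apply IsCompact.bddAbove_image (isCompact_closedBall _ _)
    apply Continuous.continuousOn
    have : (fun z : ℂ => ‖(Q (lam + z))‖)
        = fun z : ℂ => ‖(∑ s, c s * g s z)‖ := by
      funext z
      rw [key lam z, hc]
    rw [this]
    apply continuous_norm.comp
    exact continuous_finset_sum _ (fun s _ => continuous_const.mul (hgc s))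
  set M := sSup ((fun z : ℂ => ‖(Q (lam + z))‖) '' Metric.closedBall (0:ℂ) ε) with hM
  have hmem0 : ‖(Q (lam + 0))‖ ∈
      ((fun z : ℂ => ‖(Q (lam + z))‖) '' Metric.closedBall (0:ℂ) ε) :=
    Set.mem_image_of_mem _ (by simp [hε.le])
  have hM0 : 0 ≤ M := le_trans (norm_nonneg _) (le_csSup hbdd hmem0)
  have hTle : ‖T c‖ ≤ M := by
    rw [ContinuousMap.norm_le _ hM0]
    intro x
    have hx : (x:ℂ) ∈ Metric.closedBall (0:ℂ) ε := x.2
    have hval : (T c) x = Q (lam + (x:ℂ)) := by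
      simp only [hT, LinearMap.coe_mk, AddHom.coe_mk, ContinuousMap.coe_sum,
        Finset.sum_apply, ContinuousMap.coe_smul, Pi.smul_apply]
      rw [key lam (x:ℂ)]
      apply Finset.sum_congr rfl
      intro s _
      simp only [hG, ContinuousMap.coe_mk, smul_eq_mul]
      rfl
    rw [hval]
    exact le_csSup hbdd (Set.mem_image_of_mem _ hx)
  have hclow : ρ ≤ ‖c‖ := by
    have := norm_le_pi_norm c (k0, ⟨m0 0, ha0⟩, ⟨m0 1, hb0⟩)
    rw [hc] at this ⊢
    calc ρ = ‖(coef lam (k0, ⟨m0 0, ha0⟩, ⟨m0 1, hb0⟩))‖ := (hcoefabs lam).symm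
      _ = ‖coef lam (k0, ⟨m0 0, ha0⟩, ⟨m0 1, hb0⟩)‖ := rfl
      _ ≤ ‖coef lam‖ := this
  have hchain : ρ ≤ (K:ℝ) * M := by
    calc ρ ≤ ‖c‖ := hclow
      _ ≤ (K:ℝ) * ‖T c‖ := hTbound c
      _ ≤ (K:ℝ) * M := by
          apply mul_le_mul_of_nonneg_left hTle (by positivity)
  have hfun : (fun l : ℂ => ‖(∑ k, MvPolynomial.eval ![l, (starRingEnd ℂ) l] (q k) *
      Complex.exp (l * α k - (starRingEnd ℂ) l * (starRingEnd ℂ) (α k)))‖)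
      = fun l : ℂ => ‖(Q l)‖ := by
    funext l
    rw [hQ]
  rw [hfun, himg, ← hM]
  have hKpos : (0:ℝ) < (K:ℝ) := hK0
  rw [one_div_div]
  rw [div_le_iff₀ hKpos]
  nlinarith [hchain]
end

section
/- Let Ω ⊆ ℂ be open, let σ : Ω → ℝ be of class C² with σ(z) > 0 for all z ∈ Ω, let λ ∈ ℂ, and define Q := (√σ)_{zz̄}/√σ and q₁ := (∂(√σ)/∂z)/√σ on Ω. Suppose μ : Ω → ℂ is of class C² and satisfies μ_{zz̄}(z) + λ·(∂μ/∂z̄)(z) = Q(z)·μ(z) on Ω. Define, for each choice of sign, u_±(z) := (∂μ/∂z)(z) + λ·μ(z) − q₁(z)·μ(z) ± e_{−λ}(z)·((∂(conj∘μ)/∂z)(z) − q₁(z)·conj(μ(z))). Then (∂u_±/∂z̄)(z) = ∓ e_{−λ}(z)·q₁(z)·conj(u_±(z)) for all z ∈ Ω. -/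
open Complex MeasureTheory Filter Topology

/-- Wirtinger derivative `∂f/∂z`. -/
noncomputable def wdz (f : ℂ → ℂ) (z : ℂ) : ℂ :=
  (1 / 2) * ((fderiv ℝ f z) 1 - Complex.I • (fderiv ℝ f z) Complex.I)

/-- Wirtinger derivative `∂f/∂z̄`. -/
noncomputable def wdzbar (f : ℂ → ℂ) (z : ℂ) : ℂ :=
  (1 / 2) * ((fderiv ℝ f z) 1 + Complex.I • (fderiv ℝ f z) Complex.I)

/-- `√σ` as a complex-valued function. -/
noncomputable def sqrtC (σ : ℂ → ℝ) (z : ℂ) : ℂ := (Real.sqrt (σ z) : ℂ)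

/-- The conductivity-type potential `Q = (√σ)_{z z̄} / √σ`. -/
noncomputable def Qpot (σ : ℂ → ℝ) (z : ℂ) : ℂ :=
  wdz (fun w => wdzbar (sqrtC σ) w) z / sqrtC σ z

/-- `g` has an `L^p` tail: `∫_{|z| ≥ 1} |g|^p dA < ∞`. -/
def HasLpTail (p : ℝ) (g : ℂ → ℂ) : Prop :=
  MeasureTheory.IntegrableOn (fun z => ‖g z‖ ^ p)
    {z : ℂ | 1 ≤ ‖z‖} MeasureTheory.volume

/-- `e_λ(z) = exp(λz - conj λ · conj z)`, a function of modulus 1. -/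
noncomputable def expPos (lam z : ℂ) : ℂ :=
  Complex.exp (lam * z - (starRingEnd ℂ) lam * (starRingEnd ℂ) z)

/-- `e_{-λ}(z) = exp(conj λ · conj z - λz)`, a function of modulus 1. -/
noncomputable def expNeg (lam z : ℂ) : ℂ :=
  Complex.exp ((starRingEnd ℂ) lam * (starRingEnd ℂ) z - lam * z)

/-- `q₁ = (∂√σ/∂z)/√σ`. -/
noncomputable def q1pot (σ : ℂ → ℝ) (z : ℂ) : ℂ := wdz (sqrtC σ) z / sqrtC σ z

section Toolkit

variable {f g : ℂ → ℂ} {z c : ℂ}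

lemma wdzbar_congr (h : f =ᶠ[𝓝 z] g) : wdzbar f z = wdzbar g z := by
  rw [wdzbar, wdzbar, h.fderiv_eq]

lemma wdz_congr (h : f =ᶠ[𝓝 z] g) : wdz f z = wdz g z := by
  rw [wdz, wdz, h.fderiv_eq]

lemma wdzbar_add (hf : DifferentiableAt ℝ f z) (hg : DifferentiableAt ℝ g z) :
    wdzbar (fun w => f w + g w) z = wdzbar f z + wdzbar g z := by
  simp only [wdzbar, fderiv_fun_add hf hg, ContinuousLinearMap.add_apply, smul_eq_mul]; ring

lemma wdzbar_sub (hf : DifferentiableAt ℝ f z) (hg : DifferentiableAt ℝ g z) :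
    wdzbar (fun w => f w - g w) z = wdzbar f z - wdzbar g z := by
  simp only [wdzbar, fderiv_fun_sub hf hg, ContinuousLinearMap.sub_apply, smul_eq_mul]; ring

lemma wdzbar_const_mul (hf : DifferentiableAt ℝ f z) (c : ℂ) :
    wdzbar (fun w => c * f w) z = c * wdzbar f z := by
  simp only [wdzbar, fderiv_const_mul hf c, ContinuousLinearMap.smul_apply, smul_eq_mul]; ring

lemma wdzbar_mul (hf : DifferentiableAt ℝ f z) (hg : DifferentiableAt ℝ g z) :
    wdzbar (fun w => f w * g w) z = wdzbar f z * g z + f z * wdzbar g z := by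
  simp only [wdzbar, fderiv_fun_mul hf hg, ContinuousLinearMap.add_apply,
    ContinuousLinearMap.smul_apply, smul_eq_mul]; ring

lemma wdz_conj (hf : DifferentiableAt ℝ f z) :
    wdz (fun x => (starRingEnd ℂ) (f x)) z = (starRingEnd ℂ) (wdzbar f z) := by
  have h : (fun x => (starRingEnd ℂ) (f x)) = (Complex.conjCLE : ℂ → ℂ) ∘ f := rfl
  rw [wdz, h, fderiv_comp z Complex.conjCLE.differentiableAt hf]
  simp only [ContinuousLinearEquiv.fderiv, ContinuousLinearMap.coe_comp', Function.comp_apply,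
    ContinuousLinearEquiv.coe_coe, Complex.conjCLE_apply, wdzbar, smul_eq_mul, map_mul, map_add]
  simp [Complex.conj_I, map_ofNat]
  ring

lemma wdzbar_conj (hf : DifferentiableAt ℝ f z) :
    wdzbar (fun x => (starRingEnd ℂ) (f x)) z = (starRingEnd ℂ) (wdz f z) := by
  have h : (fun x => (starRingEnd ℂ) (f x)) = (Complex.conjCLE : ℂ → ℂ) ∘ f := rfl
  rw [wdzbar, h, fderiv_comp z Complex.conjCLE.differentiableAt hf]
  simp only [ContinuousLinearEquiv.fderiv, ContinuousLinearMap.coe_comp', Function.comp_apply,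
    ContinuousLinearEquiv.coe_coe, Complex.conjCLE_apply, wdz, smul_eq_mul, map_mul, map_sub]
  simp [Complex.conj_I, map_ofNat]

lemma wdzbar_comp {h' : ℂ} (hh : HasDerivAt g h' (f z)) (hf : DifferentiableAt ℝ f z) :
    wdzbar (fun x => g (f x)) z = h' * wdzbar f z := by
  have h2 := (hh.hasFDerivAt.restrictScalars ℝ).comp z hf.hasFDerivAt
  have h3 : fderiv ℝ (fun x => g (f x)) z = (ContinuousLinearMap.restrictScalars ℝ
      (ContinuousLinearMap.smulRight (1 : ℂ →L[ℂ] ℂ) h')).comp (fderiv ℝ f z) := h2.fderiv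
  rw [wdzbar, h3]
  simp only [ContinuousLinearMap.coe_comp', Function.comp_apply,
    ContinuousLinearMap.coe_restrictScalars', ContinuousLinearMap.smul_apply,
    ContinuousLinearMap.one_apply, smul_eq_mul, wdzbar,
    ContinuousLinearMap.smulRight_apply]
  ring

lemma hasFDerivAt_wdz (hf : ContDiffAt ℝ 2 f z) :
    HasFDerivAt (fun w => wdz f w)
      ((1/2 : ℂ) • (((ContinuousLinearMap.apply ℝ ℂ (1:ℂ)).comp (fderiv ℝ (fderiv ℝ f) z))
        - Complex.I • ((ContinuousLinearMap.apply ℝ ℂ Complex.I).comp (fderiv ℝ (fderiv ℝ f) z)))) z := by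
  have hF : DifferentiableAt ℝ (fderiv ℝ f) z :=
    (hf.fderiv_right (m := 1) le_rfl).differentiableAt one_ne_zero
  have A : ∀ v : ℂ, HasFDerivAt (fun w => (fderiv ℝ f w) v)
      ((ContinuousLinearMap.apply ℝ ℂ v).comp (fderiv ℝ (fderiv ℝ f) z)) z := fun v =>
    (ContinuousLinearMap.apply ℝ ℂ v).hasFDerivAt.comp z hF.hasFDerivAt
  have := (((A 1).sub ((A Complex.I).const_smul Complex.I)).const_smul ((1:ℂ)/2))
  exact this.congr_of_eventuallyEq (Filter.Eventually.of_forall fun w => by simp [wdz])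

lemma hasFDerivAt_wdzbar (hf : ContDiffAt ℝ 2 f z) :
    HasFDerivAt (fun w => wdzbar f w)
      ((1/2 : ℂ) • (((ContinuousLinearMap.apply ℝ ℂ (1:ℂ)).comp (fderiv ℝ (fderiv ℝ f) z))
        + Complex.I • ((ContinuousLinearMap.apply ℝ ℂ Complex.I).comp (fderiv ℝ (fderiv ℝ f) z)))) z := by
  have hF : DifferentiableAt ℝ (fderiv ℝ f) z :=
    (hf.fderiv_right (m := 1) le_rfl).differentiableAt one_ne_zero
  have A : ∀ v : ℂ, HasFDerivAt (fun w => (fderiv ℝ f w) v)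
      ((ContinuousLinearMap.apply ℝ ℂ v).comp (fderiv ℝ (fderiv ℝ f) z)) z := fun v =>
    (ContinuousLinearMap.apply ℝ ℂ v).hasFDerivAt.comp z hF.hasFDerivAt
  have := (((A 1).add ((A Complex.I).const_smul Complex.I)).const_smul ((1:ℂ)/2))
  exact this.congr_of_eventuallyEq (Filter.Eventually.of_forall fun w => by simp [wdzbar])

lemma wdz_diff (hf : ContDiffAt ℝ 2 f z) : DifferentiableAt ℝ (fun w => wdz f w) z :=
  (hasFDerivAt_wdz hf).differentiableAt

lemma wdzbar_diff (hf : ContDiffAt ℝ 2 f z) : DifferentiableAt ℝ (fun w => wdzbar f w) z :=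
  (hasFDerivAt_wdzbar hf).differentiableAt

lemma wdzbar_wdz_comm (hf : ContDiffAt ℝ 2 f z) :
    wdzbar (fun w => wdz f w) z = wdz (fun w => wdzbar f w) z := by
  have hs := hf.isSymmSndFDerivAt (by simp)
  have h1 := (hasFDerivAt_wdz hf).fderiv
  have h2 := (hasFDerivAt_wdzbar hf).fderiv
  rw [wdzbar, wdz, h1, h2]
  simp only [ContinuousLinearMap.smul_apply, ContinuousLinearMap.sub_apply,
    ContinuousLinearMap.add_apply, ContinuousLinearMap.coe_comp', Function.comp_apply,
    ContinuousLinearMap.apply_apply, smul_eq_mul]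
  rw [hs Complex.I 1]
  ring

lemma wdz_id : wdz (fun x : ℂ => x) z = 1 := by
  simp [wdz, fderiv_id', Complex.I_mul_I]
  norm_num

lemma wdzbar_id : wdzbar (fun x : ℂ => x) z = 0 := by
  simp [wdzbar, fderiv_id', Complex.I_mul_I]

end Toolkit

section Aux

lemma conj_diffAt {w : ℂ} : DifferentiableAt ℝ (fun x : ℂ => (starRingEnd ℂ) x) w :=
  Complex.conjCLE.differentiableAt

lemma expNeg_gdiff (lam : ℂ) (w : ℂ) :
    DifferentiableAt ℝ (fun x : ℂ => (starRingEnd ℂ) lam * (starRingEnd ℂ) x - lam * x) w :=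
  (conj_diffAt.const_mul _).sub (differentiableAt_id.const_mul _)

lemma expNeg_diff (lam : ℂ) (w : ℂ) : DifferentiableAt ℝ (fun x => expNeg lam x) w :=
  (((Complex.hasDerivAt_exp _).hasFDerivAt.restrictScalars ℝ).comp w
    (expNeg_gdiff lam w).hasFDerivAt).differentiableAt

lemma wdzbar_expNeg (lam z : ℂ) :
    wdzbar (fun w => expNeg lam w) z = (starRingEnd ℂ) lam * expNeg lam z := by
  have hg := expNeg_gdiff lam z
  have h : wdzbar (fun x => Complex.exp ((starRingEnd ℂ) lam * (starRingEnd ℂ) x - lam * x)) z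
      = Complex.exp ((starRingEnd ℂ) lam * (starRingEnd ℂ) z - lam * z) *
        wdzbar (fun x : ℂ => (starRingEnd ℂ) lam * (starRingEnd ℂ) x - lam * x) z :=
    wdzbar_comp (Complex.hasDerivAt_exp _) hg
  have hgbar : wdzbar (fun x : ℂ => (starRingEnd ℂ) lam * (starRingEnd ℂ) x - lam * x) z
      = (starRingEnd ℂ) lam := by
    have hcj : wdzbar (fun x : ℂ => (starRingEnd ℂ) x) z = (starRingEnd ℂ) (wdz (fun x : ℂ => x) z) :=
      wdzbar_conj differentiableAt_fun_id
    rw [wdzbar_sub (conj_diffAt.const_mul _) (differentiableAt_fun_id.const_mul _),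
      wdzbar_const_mul conj_diffAt, wdzbar_const_mul differentiableAt_fun_id, hcj, wdz_id, wdzbar_id]
    simp
  show wdzbar (fun x => Complex.exp ((starRingEnd ℂ) lam * (starRingEnd ℂ) x - lam * x)) z = _
  rw [h, hgbar, expNeg]; ring

lemma expNeg_mul_conj (lam z : ℂ) : expNeg lam z * (starRingEnd ℂ) (expNeg lam z) = 1 := by
  rw [expNeg, ← Complex.exp_conj, ← Complex.exp_add]
  have h : ((starRingEnd ℂ) lam * (starRingEnd ℂ) z - lam * z)
      + (starRingEnd ℂ) ((starRingEnd ℂ) lam * (starRingEnd ℂ) z - lam * z) = 0 := by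
    simp only [map_sub, map_mul, Complex.conj_conj]; ring
  rw [h, Complex.exp_zero]

lemma wdzbar_ofReal {r : ℂ → ℝ} {w : ℂ} (hr : DifferentiableAt ℝ r w) :
    wdzbar (fun x => ((r x : ℝ) : ℂ)) w = (starRingEnd ℂ) (wdz (fun x => ((r x : ℝ) : ℂ)) w) := by
  have hfd : fderiv ℝ (fun x => ((r x : ℝ) : ℂ)) w
      = Complex.ofRealCLM.comp (fderiv ℝ r w) :=
    (Complex.ofRealCLM.hasFDerivAt.comp w hr.hasFDerivAt).fderiv
  rw [wdzbar, wdz, hfd]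
  simp only [ContinuousLinearMap.coe_comp', Function.comp_apply, Complex.ofRealCLM_apply,
    smul_eq_mul, map_mul, map_sub, map_add, Complex.conj_ofReal, Complex.conj_I, map_ofNat,
    map_one, map_div₀]
  ring

end Aux


/-- Lemmas 2.1–2.3 combined, planar case: the Faddeev-type equation for `μ`
implies the Bers–Vekua equation (2.7) for `u_± = ∂μ + λμ − q₁μ ± e_{-λ}(∂(conj μ) − q₁ conj μ)`.
The sign `±` is encoded by `e ∈ {1, -1}`. -/
theorem faddeev_to_bers_vekua_planar
    (Ω : Set ℂ) (hΩ : IsOpen Ω) (σ : ℂ → ℝ) (hσ : ContDiffOn ℝ 2 σ Ω)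
    (hpos : ∀ z ∈ Ω, 0 < σ z) (lam : ℂ) (μ : ℂ → ℂ) (hμ : ContDiffOn ℝ 2 μ Ω)
    (heq : ∀ z ∈ Ω, wdz (fun w => wdzbar μ w) z + lam * wdzbar μ z = Qpot σ z * μ z)
    (e : ℂ) (he : e = 1 ∨ e = -1) :
    ∀ z ∈ Ω,
      wdzbar (fun w => wdz μ w + lam * μ w - q1pot σ w * μ w +
          e * (expNeg lam w *
            (wdz (fun x => (starRingEnd ℂ) (μ x)) w - q1pot σ w * (starRingEnd ℂ) (μ w)))) z =
        -e * (expNeg lam z * q1pot σ z *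
          (starRingEnd ℂ) (wdz μ z + lam * μ z - q1pot σ z * μ z +
            e * (expNeg lam z *
              (wdz (fun x => (starRingEnd ℂ) (μ x)) z - q1pot σ z * (starRingEnd ℂ) (μ z))))) := by
  intro z hz
  -- basic regularity of μ
  have hμ2 : ContDiffAt ℝ 2 μ z := hμ.contDiffAt (hΩ.mem_nhds hz)
  have hμd : DifferentiableAt ℝ μ z := hμ2.differentiableAt two_ne_zero
  have hμevent : ∀ᶠ w in 𝓝 z, DifferentiableAt ℝ μ w :=
    (hμ2.eventually (by simp)).mono (fun w hw => hw.differentiableAt two_ne_zero)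
  have hconjCD : ContDiff ℝ 2 (fun x : ℂ => (starRingEnd ℂ) x) :=
    Complex.conjCLE.toContinuousLinearMap.contDiff
  have hM2 : ContDiffAt ℝ 2 (fun x => (starRingEnd ℂ) (μ x)) z := hconjCD.contDiffAt.comp z hμ2
  have hMd : DifferentiableAt ℝ (fun x => (starRingEnd ℂ) (μ x)) z :=
    hM2.differentiableAt two_ne_zero
  -- regularity of √σ
  have hr2 : ContDiffAt ℝ 2 (fun w => Real.sqrt (σ w)) z :=
    (Real.contDiffAt_sqrt (ne_of_gt (hpos z hz))).comp z (hσ.contDiffAt (hΩ.mem_nhds hz))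
  have hs2 : ContDiffAt ℝ 2 (sqrtC σ) z := Complex.ofRealCLM.contDiff.contDiffAt.comp z hr2
  have hsd : DifferentiableAt ℝ (sqrtC σ) z := hs2.differentiableAt two_ne_zero
  have hsne : sqrtC σ z ≠ 0 := by
    simp only [sqrtC, ne_eq, Complex.ofReal_eq_zero]
    exact ne_of_gt (Real.sqrt_pos.2 (hpos z hz))
  have hsconj : (starRingEnd ℂ) (sqrtC σ z) = sqrtC σ z := Complex.conj_ofReal _
  have hrd : DifferentiableAt ℝ (fun w => Real.sqrt (σ w)) z := hr2.differentiableAt two_ne_zero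
  have hsbar : wdzbar (sqrtC σ) z = (starRingEnd ℂ) (wdz (sqrtC σ) z) := wdzbar_ofReal hrd
  -- Q is real
  have hsevent' : (fun w => (starRingEnd ℂ) (wdzbar (sqrtC σ) w)) =ᶠ[𝓝 z]
      (fun w => wdz (sqrtC σ) w) := by
    have hev : ∀ᶠ w in 𝓝 z, DifferentiableAt ℝ (fun x => Real.sqrt (σ x)) w :=
      (hr2.eventually (by simp)).mono (fun w hw => hw.differentiableAt two_ne_zero)
    filter_upwards [hev] with w hw
    have h : wdzbar (sqrtC σ) w = (starRingEnd ℂ) (wdz (sqrtC σ) w) := wdzbar_ofReal hw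
    rw [h, Complex.conj_conj]
  have hQreal : (starRingEnd ℂ) (Qpot σ z) = Qpot σ z := by
    have ha : (starRingEnd ℂ) (wdz (fun w => wdzbar (sqrtC σ) w) z)
        = wdzbar (fun w => (starRingEnd ℂ) (wdzbar (sqrtC σ) w)) z :=
      (wdzbar_conj (wdzbar_diff hs2)).symm
    have hb : wdzbar (fun w => (starRingEnd ℂ) (wdzbar (sqrtC σ) w)) z
        = wdzbar (fun w => wdz (sqrtC σ) w) z := wdzbar_congr hsevent'
    rw [Qpot, map_div₀, hsconj, ha, hb, wdzbar_wdz_comm hs2]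
  have hQs : wdz (fun w => wdzbar (sqrtC σ) w) z = Qpot σ z * sqrtC σ z := by
    rw [Qpot, div_mul_cancel₀ _ hsne]
  -- q₁ facts
  have hrw : q1pot σ = fun w => wdz (sqrtC σ) w * (sqrtC σ w)⁻¹ :=
    funext fun w => div_eq_mul_inv _ _
  have hinvd : DifferentiableAt ℝ (fun w => (sqrtC σ w)⁻¹) z :=
    (((hasDerivAt_inv hsne).hasFDerivAt.restrictScalars ℝ).comp z hsd.hasFDerivAt).differentiableAt
  have hq1d : DifferentiableAt ℝ (q1pot σ) z := by
    rw [hrw]; exact (wdz_diff hs2).mul hinvd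
  have hq1bar : wdzbar (q1pot σ) z = Qpot σ z - q1pot σ z * (starRingEnd ℂ) (q1pot σ z) := by
    rw [hrw, wdzbar_mul (wdz_diff hs2) hinvd, wdzbar_comp (hasDerivAt_inv hsne) hsd,
      wdzbar_wdz_comm hs2, hQs, hsbar]
    simp only [q1pot, map_div₀, hsconj]
    field_simp [hsconj]
    rw [map_div₀, hsconj, mul_div_assoc', mul_sub, mul_div_assoc', mul_div_cancel_left₀ _ hsne]
    ring
  -- second-order identities for μ
  have h1 : wdzbar (fun w => wdz μ w) z = Qpot σ z * μ z - lam * wdzbar μ z := by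
    rw [wdzbar_wdz_comm hμ2]; linear_combination heq z hz
  have hwdzM : wdz (fun x => (starRingEnd ℂ) (μ x)) z = (starRingEnd ℂ) (wdzbar μ z) :=
    wdz_conj hμd
  have hwdzbarM : wdzbar (fun x => (starRingEnd ℂ) (μ x)) z = (starRingEnd ℂ) (wdz μ z) :=
    wdzbar_conj hμd
  have h2 : wdzbar (fun w => wdz (fun x => (starRingEnd ℂ) (μ x)) w) z
      = Qpot σ z * (starRingEnd ℂ) (μ z)
        - (starRingEnd ℂ) lam * (starRingEnd ℂ) (wdzbar μ z) := by
    rw [wdzbar_wdz_comm hM2]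
    have hev : (fun w => wdzbar (fun x => (starRingEnd ℂ) (μ x)) w) =ᶠ[𝓝 z]
        (fun w => (starRingEnd ℂ) (wdz μ w)) := hμevent.mono (fun w hw => wdzbar_conj hw)
    rw [wdz_congr hev, wdz_conj (wdz_diff hμ2), h1, map_sub, map_mul, map_mul, hQreal]
  -- differentiability of the pieces
  have dwdzμ : DifferentiableAt ℝ (fun w => wdz μ w) z := wdz_diff hμ2
  have dlamμ : DifferentiableAt ℝ (fun w => lam * μ w) z := hμd.const_mul lam
  have dAB : DifferentiableAt ℝ (fun w => wdz μ w + lam * μ w) z := dwdzμ.add dlamμ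
  have dqm : DifferentiableAt ℝ (fun w => q1pot σ w * μ w) z := hq1d.mul hμd
  have dV : DifferentiableAt ℝ (fun w => wdz μ w + lam * μ w - q1pot σ w * μ w) z := dAB.sub dqm
  have dwdzM : DifferentiableAt ℝ (fun w => wdz (fun x => (starRingEnd ℂ) (μ x)) w) z :=
    wdz_diff hM2
  have dqM : DifferentiableAt ℝ (fun w => q1pot σ w * (starRingEnd ℂ) (μ w)) z := hq1d.mul hMd
  have dW : DifferentiableAt ℝ
      (fun w => wdz (fun x => (starRingEnd ℂ) (μ x)) w - q1pot σ w * (starRingEnd ℂ) (μ w)) z :=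
    dwdzM.sub dqM
  have dE : DifferentiableAt ℝ (fun w => expNeg lam w) z := expNeg_diff lam z
  have dEW : DifferentiableAt ℝ (fun w => expNeg lam w *
      (wdz (fun x => (starRingEnd ℂ) (μ x)) w - q1pot σ w * (starRingEnd ℂ) (μ w))) z := dE.mul dW
  have dG : DifferentiableAt ℝ (fun w => e * (expNeg lam w *
      (wdz (fun x => (starRingEnd ℂ) (μ x)) w - q1pot σ w * (starRingEnd ℂ) (μ w)))) z :=
    dEW.const_mul e
  have hEbar : wdzbar (fun w => expNeg lam w) z = (starRingEnd ℂ) lam * expNeg lam z :=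
    wdzbar_expNeg lam z
  have hEconj : expNeg lam z * (starRingEnd ℂ) (expNeg lam z) = 1 := expNeg_mul_conj lam z
  -- expand the left-hand side
  rw [wdzbar_add dV dG, wdzbar_const_mul dEW e, wdzbar_mul dE dW,
    wdzbar_sub dAB dqm, wdzbar_add dwdzμ dlamμ, wdzbar_const_mul hμd lam,
    wdzbar_mul hq1d hμd, wdzbar_sub dwdzM dqM, wdzbar_mul hq1d hMd,
    h1, h2, hq1bar, hEbar, hwdzbarM, hwdzM]
  -- now pure algebra
  rcases he with rfl | rfl
  · simp only [map_add, map_sub, map_mul, map_one, map_neg, Complex.conj_conj]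
    linear_combination (q1pot σ z * (wdzbar μ z - (starRingEnd ℂ) (q1pot σ z) * μ z)) * hEconj
  · simp only [map_add, map_sub, map_mul, map_one, map_neg, Complex.conj_conj]
    linear_combination (q1pot σ z * (wdzbar μ z - (starRingEnd ℂ) (q1pot σ z) * μ z)) * hEconj
end

section
/- Let λ ∈ ℂ and R₀ > 0, and let μ be a C² complex-valued function on the exterior domain {z ∈ ℂ : |z| > R₀} satisfying μ_{zz̄}(z) + λ·(∂μ/∂z̄)(z) = 0 there. Then the function z ↦ (∂μ/∂z)(z) + λ·μ(z) is holomorphic on {z : |z| > R₀}, and the function z ↦ conj(e_{λ}(z)·(∂μ/∂z̄)(z)) is holomorphic on {z : |z| > R₀} (i.e., e_{λ}·∂μ/∂z̄ is antiholomorphic there). -/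
open Complex MeasureTheory Filter Topology

private lemma cr_differentiableAt {f : ℂ → ℂ} {z : ℂ} {L : ℂ →L[ℝ] ℂ}
    (hf : HasFDerivAt f L z) (h : L Complex.I = Complex.I * L 1) :
    DifferentiableAt ℂ f z := by
  have key : ∀ c : ℂ, L c = c * L 1 := by
    intro c
    have hc : L c = (c.re : ℝ) • L 1 + (c.im : ℝ) • L Complex.I := by
      rw [← _root_.map_smul, ← _root_.map_smul, ← map_add]
      congr 1
      rw [Complex.real_smul, Complex.real_smul, mul_one]
      exact (Complex.re_add_im c).symm
    rw [hc, h, Complex.real_smul, Complex.real_smul]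
    conv_rhs => rw [← Complex.re_add_im c]
    ring
  have hres : ((ContinuousLinearMap.id ℂ ℂ).smulRight (L 1)).restrictScalars ℝ = L := by
    ext c
    simp [key c, smul_eq_mul]
  exact (hasFDerivAt_of_restrictScalars ℝ hf hres).differentiableAt

private lemma main_pointwise (lam : ℂ) (μ : ℂ → ℂ) (z : ℂ)
    (h2 : ContDiffAt ℝ 2 μ z)
    (hev : ∀ᶠ w in nhds z, HasFDerivAt μ (fderiv ℝ μ w) w)
    (heqz : wdz (fun w => wdzbar μ w) z + lam * wdzbar μ z = 0) :
    DifferentiableAt ℂ (fun w => wdz μ w + lam * μ w) z ∧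
    DifferentiableAt ℂ (fun w => (starRingEnd ℂ) (expPos lam w * wdzbar μ w)) z := by
  set f'' : ℂ →L[ℝ] ℂ →L[ℝ] ℂ := fderiv ℝ (fderiv ℝ μ) z with hf''def
  have hd1 : ContDiffAt ℝ 1 (fderiv ℝ μ) z := h2.fderiv_right (by norm_num)
  have H2 : HasFDerivAt (fderiv ℝ μ) f'' z :=
    (hd1.differentiableAt one_ne_zero).hasFDerivAt
  have hsymm := second_derivative_symmetric_of_eventually hev H2
  have hpv : ∀ v : ℂ, HasFDerivAt (fun w => fderiv ℝ μ w v) (f''.flip v) z := by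
    intro v
    simpa using H2.clm_apply (hasFDerivAt_const v z)
  have hA : HasFDerivAt (fun w => wdz μ w)
      (((1:ℂ)/2) • (f''.flip 1 - Complex.I • f''.flip Complex.I)) z := by
    simpa [wdz] using
      (((hpv 1).sub ((hpv Complex.I).const_smul Complex.I)).const_mul ((1:ℂ)/2))
  have hB : HasFDerivAt (fun w => wdzbar μ w)
      (((1:ℂ)/2) • (f''.flip 1 + Complex.I • f''.flip Complex.I)) z := by
    simpa [wdzbar] using
      (((hpv 1).add ((hpv Complex.I).const_smul Complex.I)).const_mul ((1:ℂ)/2))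
  have hT : HasFDerivAt μ (fderiv ℝ μ z) z := hev.self_of_nhds
  have heq' : ((1:ℂ)/2) * ((((1:ℂ)/2) • (f''.flip 1 + Complex.I • f''.flip Complex.I)) 1
      - Complex.I • ((((1:ℂ)/2) • (f''.flip 1 + Complex.I • f''.flip Complex.I)) Complex.I))
      + lam * (((1:ℂ)/2) * ((fderiv ℝ μ z) 1 + Complex.I • (fderiv ℝ μ z) Complex.I)) = 0 := by
    rw [wdz, hB.fderiv, wdzbar] at heqz
    exact heqz
  simp only [ContinuousLinearMap.smul_apply, ContinuousLinearMap.add_apply,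
    ContinuousLinearMap.sub_apply, ContinuousLinearMap.flip_apply, smul_eq_mul] at heq'
  constructor
  · have hL : HasFDerivAt (fun w => wdz μ w + lam * μ w)
        (((1:ℂ)/2) • (f''.flip 1 - Complex.I • f''.flip Complex.I) + lam • fderiv ℝ μ z) z :=
      hA.add (hT.const_mul lam)
    apply cr_differentiableAt hL
    simp only [ContinuousLinearMap.add_apply, ContinuousLinearMap.smul_apply,
      ContinuousLinearMap.sub_apply, ContinuousLinearMap.flip_apply, smul_eq_mul]
    linear_combination (-2*Complex.I) * heq' + (-1 : ℂ) * (hsymm 1 Complex.I)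
      + ((f'' 1) Complex.I - ((f'' Complex.I) 1)/2
        - (Complex.I/2) * ((f'' Complex.I) Complex.I)
        + lam * ((fderiv ℝ μ z) Complex.I)) * Complex.I_mul_I
  · set ez : ℂ := expPos lam z with hezdef
    set C : ℂ →L[ℝ] ℂ := Complex.conjCLE.toContinuousLinearMap with hCdef
    have hCapp : ∀ w : ℂ, C w = (starRingEnd ℂ) w := fun w => Complex.conjCLE_apply w
    set Φ : ℂ →L[ℝ] ℂ :=
      lam • ContinuousLinearMap.id ℝ ℂ - (starRingEnd ℂ) lam • C with hPhidef
    have hφ : HasFDerivAt (fun w => lam * w - (starRingEnd ℂ) lam * (starRingEnd ℂ) w) Φ z := by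
      have := ((hasFDerivAt_id z).const_mul lam).sub
        (C.hasFDerivAt.const_mul ((starRingEnd ℂ) lam))
      exact this
    have he : HasFDerivAt (expPos lam) (ez • Φ) z := by
      exact hφ.cexp
    set B : ℂ →L[ℝ] ℂ := ((1:ℂ)/2) • (f''.flip 1 + Complex.I • f''.flip Complex.I) with hBdef
    set G : ℂ →L[ℝ] ℂ := ez • B + wdzbar μ z • (ez • Φ) with hGdef
    have hg : HasFDerivAt (fun w => expPos lam w * wdzbar μ w) G z := he.mul hB
    have hF : HasFDerivAt (fun w => (starRingEnd ℂ) (expPos lam w * wdzbar μ w))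
        (C.comp G) z := by
      have h0 := C.hasFDerivAt.comp z hg
      have hfun : (⇑C ∘ fun w => expPos lam w * wdzbar μ w)
          = fun w => (starRingEnd ℂ) (expPos lam w * wdzbar μ w) := by
        funext w; exact hCapp _
      rwa [hfun] at h0
    apply cr_differentiableAt hF
    have hGI : G Complex.I = -Complex.I * G 1 := by
      have hM : wdzbar μ z
          = ((1:ℂ)/2) * ((fderiv ℝ μ z) 1 + Complex.I • (fderiv ℝ μ z) Complex.I) := rfl
      simp only [hGdef, hBdef, hPhidef, hM, ContinuousLinearMap.add_apply,
        ContinuousLinearMap.smul_apply, ContinuousLinearMap.sub_apply,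
        ContinuousLinearMap.flip_apply, ContinuousLinearMap.id_apply, hCapp,
        map_one, Complex.conj_I, smul_eq_mul, mul_one]
      linear_combination (2*Complex.I*ez) * heq'
        + (ez/2) * ((f'' Complex.I) 1 + Complex.I * ((f'' Complex.I) Complex.I)) * Complex.I_mul_I
    rw [ContinuousLinearMap.comp_apply, ContinuousLinearMap.comp_apply, hGI,
      hCapp, hCapp, map_mul]
    simp [Complex.conj_I]
/-- Lemma 4.1(i), planar case: on an exterior domain where
`μ_{z z̄} + λ ∂̄μ = 0`, the function `∂μ + λμ` is holomorphic and
`e_λ · ∂̄μ` is antiholomorphic. -/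
theorem faddeev_holomorphic_antiholomorphic_exterior
    (lam : ℂ) (R0 : ℝ) (hR0 : 0 < R0) (μ : ℂ → ℂ)
    (hμ : ContDiffOn ℝ 2 μ {z : ℂ | R0 < ‖z‖})
    (heq : ∀ z ∈ {z : ℂ | R0 < ‖z‖},
      wdz (fun w => wdzbar μ w) z + lam * wdzbar μ z = 0) :
    DifferentiableOn ℂ (fun z => wdz μ z + lam * μ z)
      {z : ℂ | R0 < ‖z‖} ∧
    DifferentiableOn ℂ (fun z => (starRingEnd ℂ) (expPos lam z * wdzbar μ z))
      {z : ℂ | R0 < ‖z‖} := by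
  have hU : IsOpen {z : ℂ | R0 < ‖z‖} :=
    isOpen_lt continuous_const continuous_norm
  have key : ∀ z ∈ {z : ℂ | R0 < ‖z‖},
      DifferentiableAt ℂ (fun w => wdz μ w + lam * μ w) z ∧
      DifferentiableAt ℂ (fun w => (starRingEnd ℂ) (expPos lam w * wdzbar μ w)) z := by
    intro z hz
    have hmem : {z : ℂ | R0 < ‖z‖} ∈ 𝓝 z := hU.mem_nhds hz
    have h2 : ContDiffAt ℝ 2 μ z := hμ.contDiffAt hmem
    have hev : ∀ᶠ w in 𝓝 z, HasFDerivAt μ (fderiv ℝ μ w) w := by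
      filter_upwards [hmem] with w hw
      exact ((hμ.contDiffAt (hU.mem_nhds hw)).differentiableAt (by norm_num)).hasFDerivAt
    exact main_pointwise lam μ z h2 hev (heq z hz)
  exact ⟨fun z hz => ((key z hz).1).differentiableWithinAt,
    fun z hz => ((key z hz).2).differentiableWithinAt⟩
end
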